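/- (Theorem 1, projection containment, vertex-local form.) Let α ∈ (0, 2π), D a finite set of directions at vertex i, x ∈ [0,1]^D, and suppose there exist nonnegative y ∈ ℝ^D with Σ_{k ∈ D} y_k = 1 and x_v ≤ Σ_{k ∈ L_v} y_k for every v ∈ D, where L_v := {v} ∪ {k ∈ D \ {v} : (θ_v − θ_k) mod 2π ≤ α}. Then for every nonempty s ⊆ D, Σ_{e ∈ s} x_e ≤ v^{(s,α)}, where v^{(s,α)} := max_{j ∈ s} |{k ∈ s : (θ_k − θ_j) mod 2π ≤ α}|. -/

import Mathlib

open Real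

noncomputable def amod (x : ℝ) : ℝ := toIcoMod Real.two_pi_pos 0 x

noncomputable def ang (a b : ℝ) : ℝ := amod (b - a)

noncomputable def Lset (D : Finset ℝ) (α v : ℝ) : Finset ℝ :=
  insert v ((D.erase v).filter fun k => ang k v ≤ α)

lemma amod_nonneg (t : ℝ) : 0 ≤ amod t :=
  (toIcoMod_mem_Ico Real.two_pi_pos 0 t).1

lemma amod_lt (t : ℝ) : amod t < 2 * π := by
  have := (toIcoMod_mem_Ico Real.two_pi_pos 0 t).2
  simpa [amod] using this

lemma amod_zero : amod 0 = 0 :=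
  (toIcoMod_eq_self Real.two_pi_pos).mpr (by constructor <;> [exact le_refl 0; positivity])

lemma amod_sub (e j k : ℝ) (h : amod (j - k) ≤ amod (e - k)) :
    amod (e - j) = amod (e - k) - amod (j - k) := by
  have h1 := toIcoMod_add_toIcoDiv_zsmul Real.two_pi_pos 0 (e - k)
  have h2 := toIcoMod_add_toIcoDiv_zsmul Real.two_pi_pos 0 (j - k)
  rw [amod, toIcoMod_eq_iff Real.two_pi_pos]
  refine ⟨⟨by linarith [amod_nonneg (j - k)], ?_⟩,
    ⟨toIcoDiv Real.two_pi_pos 0 (e - k) - toIcoDiv Real.two_pi_pos 0 (j - k), ?_⟩⟩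
  · have := amod_lt (e - k)
    have := amod_nonneg (j - k)
    simp only [zero_add]
    linarith
  · simp only [zsmul_eq_mul] at h1 h2 ⊢
    push_cast
    unfold amod at *
    linarith

theorem stmt13 (α : ℝ) (hα : α ∈ Set.Ioo 0 (2 * π)) (D : Finset ℝ)
    (hD : ∀ θ ∈ D, θ ∈ Set.Ico 0 (2 * π)) (x y : ℝ → ℝ)
    (hx : ∀ v ∈ D, x v ∈ Set.Icc (0 : ℝ) 1)
    (hy0 : ∀ k ∈ D, 0 ≤ y k) (hy1 : ∑ k ∈ D, y k = 1)
    (hxy : ∀ v ∈ D, x v ≤ ∑ k ∈ Lset D α v, y k) :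
    ∀ s : Finset ℝ, s ⊆ D → ∀ hs : s.Nonempty,
      (∑ e ∈ s, x e) ≤
        (((s.sup' hs fun j => (s.filter fun k => ang j k ≤ α).card) : ℕ) : ℝ) := by
  intro s hsD hs
  set V : ℕ := s.sup' hs fun j => (s.filter fun k => ang j k ≤ α).card with hV
  -- counting bound for each k ∈ D
  have key : ∀ k ∈ D, (s.filter fun e => k ∈ Lset D α e).card ≤ V := by
    intro k hk
    have h1 : (s.filter fun e => k ∈ Lset D α e) ⊆ s.filter fun e => ang k e ≤ α := by
      intro e he
      simp only [Finset.mem_filter, Lset, Finset.mem_insert, Finset.mem_erase] at he ⊢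
      obtain ⟨hes, h⟩ := he
      refine ⟨hes, ?_⟩
      rcases h with rfl | ⟨_, h⟩
      · rw [ang, sub_self, amod_zero]; exact le_of_lt hα.1
      · exact h
    refine (Finset.card_le_card h1).trans ?_
    rcases Finset.eq_empty_or_nonempty (s.filter fun e => ang k e ≤ α) with hemp | hne
    · simp [hemp]
    · obtain ⟨j, hj, hjmin⟩ := Finset.exists_min_image _ (fun e => ang k e) hne
      simp only [Finset.mem_filter] at hj
      have hsub : (s.filter fun e => ang k e ≤ α) ⊆ s.filter fun e => ang j e ≤ α := by
        intro e he
        simp only [Finset.mem_filter] at he ⊢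
        refine ⟨he.1, ?_⟩
        have hmin := hjmin e (Finset.mem_filter.mpr he)
        have heq : amod (e - j) = amod (e - k) - amod (j - k) :=
          amod_sub e j k hmin
        have h0 : 0 ≤ amod (j - k) := amod_nonneg _
        show amod (e - j) ≤ α
        rw [heq]
        have : amod (e - k) ≤ α := he.2
        linarith
      refine (Finset.card_le_card hsub).trans ?_
      rw [hV]
      exact Finset.le_sup' (fun j => (s.filter fun k => ang j k ≤ α).card) hj.1
  -- main chain
  have hLsub : ∀ e ∈ s, Lset D α e ⊆ D := by
    intro e he
    intro k hk
    simp only [Lset, Finset.mem_insert, Finset.mem_filter, Finset.mem_erase] at hk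
    rcases hk with rfl | ⟨⟨_, hkD⟩, _⟩
    · exact hsD he
    · exact hkD
  calc ∑ e ∈ s, x e
      ≤ ∑ e ∈ s, ∑ k ∈ Lset D α e, y k :=
        Finset.sum_le_sum fun e he => hxy e (hsD he)
    _ = ∑ e ∈ s, ∑ k ∈ D, if k ∈ Lset D α e then y k else 0 := by
        refine Finset.sum_congr rfl fun e he => ?_
        rw [← Finset.sum_filter, Finset.filter_mem_eq_inter,
          Finset.inter_eq_right.mpr (hLsub e he)]
    _ = ∑ k ∈ D, ∑ e ∈ s, if k ∈ Lset D α e then y k else 0 := Finset.sum_comm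
    _ = ∑ k ∈ D, ((s.filter fun e => k ∈ Lset D α e).card : ℝ) * y k := by
        refine Finset.sum_congr rfl fun k hk => ?_
        rw [← Finset.sum_filter, Finset.sum_const, nsmul_eq_mul]
    _ ≤ ∑ k ∈ D, (V : ℝ) * y k := by
        refine Finset.sum_le_sum fun k hk => ?_
        exact mul_le_mul_of_nonneg_right (by exact_mod_cast key k hk) (hy0 k hk)
    _ = (V : ℝ) := by rw [← Finset.mul_sum, hy1, mul_one]
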